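/- Let x₁, …, x_{3m} be positive integers with T/4 < x_i < T/2 and Σ x_i = mT. Batches are processed sequentially, one per unit time; if request i is in batch t, its completion time is t. If there exists a partition into m blocks each of sum exactly T, then the minimum total completion time over all feasible batch schedules (each batch having sum ≤ T) equals 3m(m+1)/2. If no such partition exists, any feasible schedule has total completion time strictly greater than 3m(m+1)/2. -/

import Mathlib

open Finset


lemma aux_card_le_three' {n T : ℕ} (x : Fin n → ℕ) (hlow : ∀ i, T < 4 * x i)
    (S : Finset (Fin n)) (hS : ∑ i ∈ S, x i ≤ T) : S.card ≤ 3 := by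
  by_contra h
  push_neg at h
  have h2 : S.card * (T + 1) ≤ ∑ i ∈ S, 4 * x i := by
    calc S.card * (T + 1) = ∑ _i ∈ S, (T + 1) := by rw [Finset.sum_const, smul_eq_mul]
    _ ≤ _ := Finset.sum_le_sum fun i _ => hlow i
  rw [← Finset.mul_sum] at h2
  have h3 : 4 * (T + 1) ≤ S.card * (T + 1) := Nat.mul_le_mul_right _ h
  have h4 : 4 * (∑ i ∈ S, x i) ≤ 4 * T := Nat.mul_le_mul_left _ hS
  omega

lemma aux_card_eq_three {n T : ℕ} (x : Fin n → ℕ) (hlow : ∀ i, T < 4 * x i)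
    (hhigh : ∀ i, 2 * x i < T) (i0 : Fin n)
    (S : Finset (Fin n)) (hS : ∑ i ∈ S, x i = T) : S.card = 3 := by
  have hle := aux_card_le_three' x hlow S hS.le
  have hT3 : 3 ≤ T := by have := hlow i0; have := hhigh i0; omega
  by_contra h
  have hc2 : S.card ≤ 2 := by omega
  have h2 : ∑ i ∈ S, 2 * x i ≤ S.card * (T - 1) := by
    calc ∑ i ∈ S, 2 * x i ≤ ∑ _i ∈ S, (T - 1) :=
      Finset.sum_le_sum fun i _ => by have := hhigh i; omega
    _ = S.card * (T - 1) := by rw [Finset.sum_const, smul_eq_mul]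
  rw [← Finset.mul_sum, hS] at h2
  have h3 : S.card * (T - 1) ≤ 2 * (T - 1) := Nat.mul_le_mul_right _ hc2
  omega

lemma aux_upper {m T : ℕ} (hm : 0 < m) (x : Fin (3 * m) → ℕ)
    (hlow : ∀ i, T < 4 * x i) (hhigh : ∀ i, 2 * x i < T)
    (P : Finpartition (Finset.univ : Finset (Fin (3 * m))))
    (hPc : P.parts.card = m) (hPs : ∀ B ∈ P.parts, ∑ i ∈ B, x i = T) :
    ∃ f : Fin (3 * m) → ℕ, (∀ i, 1 ≤ f i) ∧
      (∀ t : ℕ, ∑ i ∈ Finset.univ.filter (fun i => f i = t), x i ≤ T) ∧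
      ∑ i, f i = 3 * m * (m + 1) / 2 := by
  classical
  have i0 : Fin (3 * m) := ⟨0, by omega⟩
  set e : {B // B ∈ P.parts} ≃ Fin m := P.parts.equivFin.trans (finCongr hPc) with he
  set idx : Finset (Fin (3 * m)) → ℕ :=
    fun A => if h : A ∈ P.parts then (e ⟨A, h⟩).val else 0 with hidx
  have hidxlt : ∀ A ∈ P.parts, idx A < m := by
    intro A hA
    rw [hidx]
    simp only [dif_pos hA]
    exact (e ⟨A, hA⟩).isLt
  have hidxinj : ∀ A ∈ P.parts, ∀ A' ∈ P.parts, idx A = idx A' → A = A' := by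
    intro A hA A' hA' h
    rw [hidx] at h
    simp only [dif_pos hA, dif_pos hA'] at h
    have := e.injective (Fin.val_injective h)
    exact congrArg Subtype.val this
  set f : Fin (3 * m) → ℕ := fun i => idx (P.part i) + 1 with hf
  have hpartm : ∀ i : Fin (3 * m), P.part i ∈ P.parts := fun i => P.part_mem.mpr (mem_univ i)
  have hcard3 : ∀ A ∈ P.parts, A.card = 3 :=
    fun A hA => aux_card_eq_three x hlow hhigh i0 A (hPs A hA)
  refine ⟨f, fun i => Nat.le_add_left 1 _, ?_, ?_⟩
  · intro t
    rcases Finset.eq_empty_or_nonempty (univ.filter fun i => f i = t) with h | h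
    · rw [h, Finset.sum_empty]; exact Nat.zero_le T
    · obtain ⟨j, hj⟩ := h
      simp only [mem_filter, mem_univ, true_and] at hj
      have hsub : (univ.filter fun i => f i = t) ⊆ P.part j := by
        intro i hi
        simp only [mem_filter, mem_univ, true_and] at hi
        have : idx (P.part i) = idx (P.part j) := by
          have := hi.trans hj.symm
          rw [hf] at this
          simpa using this
        have heqp : P.part i = P.part j := hidxinj _ (hpartm i) _ (hpartm j) this
        exact heqp ▸ P.mem_part (mem_univ i)
      calc ∑ i ∈ univ.filter (fun i => f i = t), x i
          ≤ ∑ i ∈ P.part j, x i := Finset.sum_le_sum_of_subset hsub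
        _ = T := hPs _ (hpartm j)
  · have hsplit : ∑ i, f i = ∑ A ∈ P.parts, ∑ i ∈ A, f i := by
      conv_lhs => rw [← P.biUnion_parts]
      exact Finset.sum_biUnion (Finset.supIndep_iff_pairwiseDisjoint.mp P.supIndep)
    have hconst : ∀ A ∈ P.parts, ∑ i ∈ A, f i = 3 * (idx A + 1) := by
      intro A hA
      have : ∀ i ∈ A, f i = idx A + 1 := by
        intro i hi
        rw [hf]
        simp only
        rw [P.part_eq_of_mem hA hi]
      rw [Finset.sum_congr rfl this, Finset.sum_const, hcard3 A hA, smul_eq_mul]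
    have hsum2 : ∑ A ∈ P.parts, ∑ i ∈ A, f i = 3 * ∑ A ∈ P.parts, (idx A + 1) := by
      rw [Finset.mul_sum]
      exact Finset.sum_congr rfl hconst
    have hbij : ∑ A ∈ P.parts, (idx A + 1) = ∑ k ∈ range m, (k + 1) := by
      apply Finset.sum_bij (fun A _ => idx A)
      · intro A hA; exact mem_range.mpr (hidxlt A hA)
      · intro A hA A' hA' h; exact hidxinj A hA A' hA' h
      · intro k hk
        have hk' : k < m := mem_range.mp hk
        refine ⟨(e.symm ⟨k, hk'⟩).1, (e.symm ⟨k, hk'⟩).2, ?_⟩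
        rw [hidx]
        simp only [dif_pos (e.symm ⟨k, hk'⟩).2]
        have : (⟨(e.symm ⟨k, hk'⟩).1, (e.symm ⟨k, hk'⟩).2⟩ : {B // B ∈ P.parts}) =
            e.symm ⟨k, hk'⟩ := rfl
        rw [this, Equiv.apply_symm_apply]
      · intro A hA; rfl
    have hgauss : (∑ k ∈ range m, (k + 1)) * 2 = m * (m + 1) := by
      have h2 : (∑ k ∈ range m, k) * 2 = m * (m - 1) := Finset.sum_range_id_mul_two m
      have h3 : ∑ k ∈ range m, (k + 1) = (∑ k ∈ range m, k) + m := by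
        rw [Finset.sum_add_distrib, Finset.sum_const, card_range, smul_eq_mul, mul_one]
      rw [h3]
      have : ((∑ k ∈ range m, k) + m) * 2 = (∑ k ∈ range m, k) * 2 + 2 * m := by ring
      rw [this, h2]
      cases m with
      | zero => simp
      | succ n => simp only [Nat.add_sub_cancel]; ring
    have hfin : (∑ i, f i) * 2 = 3 * m * (m + 1) := by
      rw [hsplit, hsum2, hbij, mul_assoc, hgauss]; ring
    have heven : (3 * m * (m + 1)) % 2 = 0 := by
      have : Even (m * (m + 1)) := Nat.even_mul_succ_self m
      have h2 : Even (3 * (m * (m + 1))) := this.mul_left 3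
      rw [mul_assoc]
      exact Nat.even_iff.mp h2
    omega

lemma aux_key {m T : ℕ} (hm : 0 < m) (x : Fin (3 * m) → ℕ)
    (hlow : ∀ i, T < 4 * x i) (hhigh : ∀ i, 2 * x i < T)
    (hsum : ∑ i, x i = m * T)
    (f : Fin (3 * m) → ℕ) (hf1 : ∀ i, 1 ≤ f i)
    (hfeas : ∀ t : ℕ, ∑ i ∈ Finset.univ.filter (fun i => f i = t), x i ≤ T) :
    3 * m * (m + 1) / 2 ≤ ∑ i, f i ∧
      (∑ i, f i = 3 * m * (m + 1) / 2 →
        ∃ P : Finpartition (Finset.univ : Finset (Fin (3 * m))),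
          P.parts.card = m ∧ ∀ B ∈ P.parts, ∑ i ∈ B, x i = T) := by
  classical
  set N := m + 1 + ∑ i, f i with hNdef
  have hmN : m < N := by omega
  have hfN : ∀ i, f i ≤ N := by
    intro i
    have := Finset.single_le_sum (f := f) (fun j _ => Nat.zero_le _) (mem_univ i)
    omega
  set c : ℕ → ℕ := fun t => (univ.filter fun i => t < f i).card with hc
  -- swap
  have hswap : ∑ i, f i = ∑ t ∈ range N, c t := by
    have h1 : ∀ i : Fin (3 * m), f i = ∑ t ∈ range N, (if t < f i then 1 else 0) := by
      intro i
      have hfi : (range N).filter (fun t => t < f i) = range (f i) := by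
        ext t
        simp only [mem_filter, mem_range]
        exact ⟨fun h => h.2, fun h => ⟨lt_of_lt_of_le h (hfN i), h⟩⟩
      calc f i = (range (f i)).card := (card_range _).symm
        _ = ((range N).filter (fun t => t < f i)).card := by rw [hfi]
        _ = ∑ t ∈ range N, (if t < f i then 1 else 0) := Finset.card_filter _ _
    calc ∑ i, f i = ∑ i, ∑ t ∈ range N, (if t < f i then 1 else 0) :=
          Finset.sum_congr rfl fun i _ => h1 i
      _ = ∑ t ∈ range N, ∑ i, (if t < f i then 1 else 0) := Finset.sum_comm
      _ = ∑ t ∈ range N, c t :=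
          Finset.sum_congr rfl fun t _ => (Finset.card_filter _ _).symm
  have h3 : ∀ t, (univ.filter fun i => f i = t).card ≤ 3 :=
    fun t => aux_card_le_three' x hlow _ (hfeas t)
  have hcount : ∀ t, 3 * m ≤ c t + 3 * t := by
    intro t
    have hsplit : c t + (univ.filter fun i => f i ≤ t).card = 3 * m := by
      have hneg : (univ.filter fun i => f i ≤ t) = univ.filter (fun i => ¬ t < f i) := by
        simp [not_lt]
      rw [hneg, hc]
      have := Finset.card_filter_add_card_filter_not
        (s := (univ : Finset (Fin (3 * m)))) (p := fun i => t < f i)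
      simpa using this
    have hle : (univ.filter fun i => f i ≤ t).card ≤ 3 * t := by
      have hsub : (univ.filter fun i => f i ≤ t) ⊆
          (Icc 1 t).biUnion (fun s => univ.filter fun i => f i = s) := by
        intro i hi
        simp only [mem_filter, mem_univ, true_and] at hi
        exact Finset.mem_biUnion.mpr ⟨f i, mem_Icc.mpr ⟨hf1 i, hi⟩, by simp⟩
      calc (univ.filter fun i => f i ≤ t).card
          ≤ ((Icc 1 t).biUnion (fun s => univ.filter fun i => f i = s)).card :=
            Finset.card_le_card hsub
        _ ≤ ∑ s ∈ Icc 1 t, (univ.filter fun i => f i = s).card := Finset.card_biUnion_le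
        _ ≤ ∑ _s ∈ Icc 1 t, 3 := Finset.sum_le_sum fun s _ => h3 s
        _ = 3 * t := by rw [Finset.sum_const, Nat.card_Icc, smul_eq_mul]; omega
    omega
  -- Gauss sum
  have hgauss : (∑ t ∈ range m, 3 * (m - t)) * 2 = 3 * m * (m + 1) := by
    have h1 : ∑ t ∈ range m, (m - t) = ∑ t ∈ range m, (t + 1) := by
      have := Finset.sum_range_reflect (fun j => j + 1) m
      calc ∑ t ∈ range m, (m - t) = ∑ t ∈ range m, (m - 1 - t + 1) := by
            refine Finset.sum_congr rfl fun t ht => ?_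
            have := mem_range.mp ht; omega
        _ = ∑ t ∈ range m, (t + 1) := this
    have h2 : (∑ t ∈ range m, t) * 2 = m * (m - 1) := Finset.sum_range_id_mul_two m
    have h3' : ∑ t ∈ range m, (t + 1) = (∑ t ∈ range m, t) + m := by
      rw [Finset.sum_add_distrib, Finset.sum_const, card_range, smul_eq_mul, mul_one]
    rw [← Finset.mul_sum, h1, h3', mul_assoc]
    have : ((∑ t ∈ range m, t) + m) * 2 = (∑ t ∈ range m, t) * 2 + 2 * m := by ring
    rw [this, h2]
    have hmm : m * (m - 1) + 2 * m = m * (m + 1) := by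
      cases m with
      | zero => simp
      | succ k => simp only [Nat.add_sub_cancel]; ring
    rw [hmm]; ring
  have hlowerm : ∑ t ∈ range m, 3 * (m - t) ≤ ∑ t ∈ range m, c t :=
    Finset.sum_le_sum fun t ht => by
      have h1 := hcount t
      have h2 := mem_range.mp ht
      omega
  have hrange : ∑ t ∈ range m, c t ≤ ∑ t ∈ range N, c t :=
    Finset.sum_le_sum_of_subset (range_subset_range.mpr hmN.le)
  have h2E : 3 * m * (m + 1) ≤ (∑ i, f i) * 2 := by
    rw [hswap]
    calc 3 * m * (m + 1) = (∑ t ∈ range m, 3 * (m - t)) * 2 := hgauss.symm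
      _ ≤ (∑ t ∈ range N, c t) * 2 := by
          have := hlowerm.trans hrange
          omega
  constructor
  · omega
  · intro heq
    -- equality analysis
    set d : ℕ → ℕ := fun t => 3 * (m - t) with hd
    have hdN : ∑ t ∈ range N, d t = ∑ t ∈ range m, d t := by
      symm
      apply Finset.sum_subset (range_subset_range.mpr hmN.le)
      intro t _ hnt
      have : m ≤ t := by simpa using hnt
      simp [hd, Nat.sub_eq_zero_of_le this]
    have hpt : ∀ t ∈ range N, d t ≤ c t := fun t _ => by
      have := hcount t; simp only [hd]; omega
    have hall : ∀ t ∈ range N, d t = c t := by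
      apply (Finset.sum_eq_sum_iff_of_le hpt).mp
      rw [hdN]
      have e1 : (∑ t ∈ range m, d t) * 2 = 3 * m * (m + 1) := hgauss
      have e2 : ∑ t ∈ range N, c t = 3 * m * (m + 1) / 2 := hswap ▸ heq
      have e3 : ∑ t ∈ range m, d t ≤ ∑ t ∈ range N, c t := hlowerm.trans hrange
      omega
    have hflem : ∀ i, f i ≤ m := by
      intro i
      have hcm : c m = 0 := by
        have := (hall m (mem_range.mpr hmN)).symm
        simp [hd] at this
        omega
      by_contra h
      push_neg at h
      have hi : i ∈ univ.filter (fun j => m < f j) := by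
        simp only [mem_filter, mem_univ, true_and]; exact h
      have := Finset.card_eq_zero.mp hcm
      rw [this] at hi
      exact absurd hi (Finset.notMem_empty i)
    have hcard3 : ∀ t ∈ Icc 1 m, (univ.filter fun i => f i = t).card = 3 := by
      intro t ht
      rw [mem_Icc] at ht
      have hu : (univ.filter fun i => t - 1 < f i) =
          (univ.filter fun i => f i = t) ∪ (univ.filter fun i => t < f i) := by
        ext i
        simp only [mem_filter, mem_union, mem_univ, true_and]
        omega
      have hdisj : Disjoint (univ.filter fun i => f i = t) (univ.filter fun i => t < f i) := by
        rw [Finset.disjoint_left]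
        intro i hi1 hi2
        simp only [mem_filter, mem_univ, true_and] at hi1 hi2
        omega
      have hsplit : c (t - 1) = (univ.filter fun i => f i = t).card + c t := by
        rw [hc]
        simp only
        rw [hu, Finset.card_union_of_disjoint hdisj]
      have h1 : c (t - 1) = d (t - 1) := (hall _ (mem_range.mpr (by omega))).symm
      have h2 : c t = d t := (hall _ (mem_range.mpr (by omega))).symm
      simp only [hd] at h1 h2
      omega
    -- build partition
    set B : ℕ → Finset (Fin (3 * m)) := fun t => univ.filter fun i => f i = t with hB
    have hBne : ∀ t ∈ Icc 1 m, (B t).Nonempty := by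
      intro t ht
      rw [← Finset.card_pos, hB]
      simp only
      rw [hcard3 t ht]
      norm_num
    have hmemB : ∀ t i, i ∈ B t ↔ f i = t := by
      intro t i; simp [hB]
    have hdisjB : ∀ t s : ℕ, t ≠ s → Disjoint (B t) (B s) := by
      intro t s hts
      rw [Finset.disjoint_left]
      intro i hi1 hi2
      rw [hmemB] at hi1 hi2
      exact hts (hi1 ▸ hi2)
    have hBinj : Set.InjOn B ↑(Icc 1 m) := by
      intro t ht s hs hts
      by_contra hne
      obtain ⟨i, hi⟩ := hBne t (Finset.mem_coe.mp ht)
      have hi2 : i ∈ B s := hts ▸ hi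
      rw [hmemB] at hi hi2
      exact hne (hi ▸ hi2.symm ▸ rfl)
    have hcover : (Icc 1 m).biUnion B = univ := by
      ext i
      simp only [Finset.mem_biUnion, mem_univ, iff_true]
      exact ⟨f i, mem_Icc.mpr ⟨hf1 i, hflem i⟩, (hmemB _ _).mpr rfl⟩
    have hsum' : ∑ t ∈ Icc 1 m, ∑ i ∈ B t, x i = m * T := by
      rw [← Finset.sum_biUnion]
      · rw [hcover]; exact hsum
      · intro t ht s hs hts
        exact hdisjB t s hts
    have hpartsum : ∀ t ∈ Icc 1 m, ∑ i ∈ B t, x i = T := by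
      by_contra h
      push_neg at h
      obtain ⟨t0, ht0, hne⟩ := h
      have hlt : ∑ i ∈ B t0, x i < T := lt_of_le_of_ne (hfeas t0) hne
      have : ∑ t ∈ Icc 1 m, ∑ i ∈ B t, x i < ∑ _t ∈ Icc 1 m, T :=
        Finset.sum_lt_sum (fun t _ => hfeas t) ⟨t0, ht0, hlt⟩
      rw [hsum', Finset.sum_const, Nat.card_Icc, smul_eq_mul] at this
      simp only [Nat.add_sub_cancel] at this
      omega
    refine ⟨⟨(Icc 1 m).image B, ?_, ?_, ?_⟩, ?_, ?_⟩
    · rw [Finset.supIndep_iff_pairwiseDisjoint]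
      intro a ha b hb hab
      obtain ⟨t, ht, rfl⟩ := Finset.mem_image.mp (Finset.mem_coe.mp ha)
      obtain ⟨s, hs, rfl⟩ := Finset.mem_image.mp (Finset.mem_coe.mp hb)
      have hts : t ≠ s := fun h => hab (by rw [h])
      exact hdisjB t s hts
    · ext i
      simp only [Finset.mem_sup, mem_univ, iff_true, id_eq]
      exact ⟨B (f i),
        Finset.mem_image_of_mem B (mem_Icc.mpr ⟨hf1 i, hflem i⟩), (hmemB _ _).mpr rfl⟩
    · intro hbot
      obtain ⟨t, ht, hBt⟩ := Finset.mem_image.mp hbot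
      have := hBne t ht
      rw [hBt] at this
      exact Finset.not_nonempty_empty this
    · rw [Finset.card_image_of_injOn hBinj, Nat.card_Icc]
      omega
    · intro A hA
      obtain ⟨t, ht, rfl⟩ := Finset.mem_image.mp hA
      exact hpartsum t ht

theorem stmt6 (m T : ℕ) (hm : 0 < m) (x : Fin (3 * m) → ℕ)
    (hlow : ∀ i, T < 4 * x i) (hhigh : ∀ i, 2 * x i < T)
    (hsum : ∑ i, x i = m * T) :
    ((∃ P : Finpartition (Finset.univ : Finset (Fin (3 * m))),
        P.parts.card = m ∧ ∀ B ∈ P.parts, ∑ i ∈ B, x i = T) →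
      (∃ f : Fin (3 * m) → ℕ, (∀ i, 1 ≤ f i) ∧
          (∀ t : ℕ, ∑ i ∈ Finset.univ.filter (fun i => f i = t), x i ≤ T) ∧
          ∑ i, f i = 3 * m * (m + 1) / 2) ∧
      (∀ f : Fin (3 * m) → ℕ, (∀ i, 1 ≤ f i) →
          (∀ t : ℕ, ∑ i ∈ Finset.univ.filter (fun i => f i = t), x i ≤ T) →
          3 * m * (m + 1) / 2 ≤ ∑ i, f i)) ∧
    ((¬ ∃ P : Finpartition (Finset.univ : Finset (Fin (3 * m))),
        P.parts.card = m ∧ ∀ B ∈ P.parts, ∑ i ∈ B, x i = T) →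
      ∀ f : Fin (3 * m) → ℕ, (∀ i, 1 ≤ f i) →
        (∀ t : ℕ, ∑ i ∈ Finset.univ.filter (fun i => f i = t), x i ≤ T) →
        3 * m * (m + 1) / 2 < ∑ i, f i) := by
  constructor
  · intro hP
    obtain ⟨P, hPc, hPs⟩ := hP
    refine ⟨aux_upper hm x hlow hhigh P hPc hPs, ?_⟩
    intro f hf1 hfeas
    exact (aux_key hm x hlow hhigh hsum f hf1 hfeas).1
  · intro hnP f hf1 hfeas
    obtain ⟨hle, heq⟩ := aux_key hm x hlow hhigh hsum f hf1 hfeas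
    refine lt_of_le_of_ne hle ?_
    intro h
    exact hnP (heq h.symm)
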